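/- arXiv:1706.01846 — 3 statements merged into one kernel-verified Lean document; each statement's English description precedes it below -/
import Mathlib

section
/- Let $P$ be an $n \times n$ symmetric idempotent matrix (orthogonal projection), $Z$ an $n \times q$ matrix, and $D$ a $q \times q$ symmetric positive definite matrix. Then $(I - P) Z (Z^T (I-P) Z + D)^{-1} Z^T (I - P) \preceq I - P$. -/
open Matrix

/-- If `P` is an `n × n` orthogonal projection, `Z` is `n × q` and `D` is symmetric
positive definite, then `(I-P) Z (Zᵀ(I-P)Z + D)⁻¹ Zᵀ (I-P) ⪯ I - P`. -/
theorem stmt_9 (n q : ℕ) (P : Matrix (Fin n) (Fin n) ℝ)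
    (hPsymm : P.IsSymm) (hPidem : P * P = P)
    (Z : Matrix (Fin n) (Fin q) ℝ) (D : Matrix (Fin q) (Fin q) ℝ) (hD : D.PosDef) :
    ((1 - P) - (1 - P) * Z * (Zᵀ * (1 - P) * Z + D)⁻¹ * Zᵀ * (1 - P)).PosSemidef := by
  set Q : Matrix (Fin n) (Fin n) ℝ := 1 - P with hQ
  have hQsymm : Qᵀ = Q := by
    rw [hQ, transpose_sub, transpose_one, hPsymm.eq]
  have hQidem : Q * Q = Q := by
    rw [hQ]
    simp [sub_mul, mul_sub, hPidem]
  set W : Matrix (Fin n) (Fin q) ℝ := Q * Z with hW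
  have hWT : Wᵀ = Zᵀ * Q := by rw [hW, transpose_mul, hQsymm]
  have hZQZ : Zᵀ * Q * Z = Wᵀ * W := by
    rw [hWT, hW]
    conv_rhs => rw [← Matrix.mul_assoc]
    rw [Matrix.mul_assoc Zᵀ Q Q, hQidem]
  set M : Matrix (Fin q) (Fin q) ℝ := Zᵀ * Q * Z + D with hM
  have hMpd : M.PosDef := by
    rw [hM, hZQZ]
    exact Matrix.PosDef.posSemidef_add (posSemidef_conjTranspose_mul_self W) hD
  clear_value M W Q
  have : Invertible M := hMpd.isUnit.invertible
  -- block matrix argument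
  have hblock : (fromBlocks (1 : Matrix (Fin n) (Fin n) ℝ) W Wᴴ M).PosSemidef := by
    have h1 : (fromBlocks (1 : Matrix (Fin n) (Fin n) ℝ) W Wᴴ (Wᴴ * W)).PosSemidef := by
      have h := posSemidef_conjTranspose_mul_self
        (fromCols (1 : Matrix (Fin n) (Fin n) ℝ) W)
      rw [conjTranspose_fromCols_eq_fromRows_conjTranspose, fromRows_mul_fromCols] at h
      simpa using h
    have h2 : (fromBlocks (0 : Matrix (Fin n) (Fin n) ℝ) 0 0 D).PosSemidef := by
      rw [posSemidef_iff_dotProduct_mulVec]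
      constructor
      · rw [IsHermitian, fromBlocks_conjTranspose, conjTranspose_zero, conjTranspose_zero,
          conjTranspose_zero, hD.isHermitian.eq]
      · intro x
        simp only [fromBlocks_mulVec, zero_mulVec, add_zero, zero_add]
        have := (posSemidef_iff_dotProduct_mulVec.mp hD.posSemidef).2 (x ∘ Sum.inr)
        simpa [dotProduct, Fintype.sum_sum_type] using this
    have h3 := h1.add h2
    rwa [show fromBlocks (1 : Matrix (Fin n) (Fin n) ℝ) W Wᴴ (Wᴴ * W) +
        fromBlocks 0 0 0 D = fromBlocks 1 W Wᴴ (Wᴴ * W + D) by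
          rw [fromBlocks_add]; simp,
        show Wᴴ * W + D = M by
          rw [hM, hZQZ]; rfl] at h3
  have hschur : ((1 : Matrix (Fin n) (Fin n) ℝ) - W * M⁻¹ * Wᴴ).PosSemidef :=
    (PosDef.fromBlocks₂₂ _ _ hMpd).mp hblock
  have hconj := hschur.mul_mul_conjTranspose_same Q
  have hQH : Qᴴ = Q := by rw [show Qᴴ = Qᵀ from rfl, hQsymm]
  have hWH : Wᴴ = Zᵀ * Q := by rw [show Wᴴ = Wᵀ from rfl, hWT]
  have key : Q * ((1 : Matrix (Fin n) (Fin n) ℝ) - W * M⁻¹ * Wᴴ) * Qᴴ =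
      Q - Q * Z * M⁻¹ * Zᵀ * Q := by
    rw [hQH, hWH, hW, mul_sub, sub_mul, mul_one, hQidem]
    congr 1
    rw [show Q * (Q * Z * M⁻¹ * (Zᵀ * Q)) * Q = (Q * Q) * Z * M⁻¹ * Zᵀ * (Q * Q) by
      simp only [Matrix.mul_assoc], hQidem]
  rw [key] at hconj
  rw [hW]
  exact hconj
end

section
/- Let $A$ be a $q \times q$ symmetric positive semidefinite matrix with spectral decomposition $A = U^T \Lambda U$, Moore–Penrose pseudoinverse $A^+$, and let $P_A$ denote the orthogonal projection onto the column space of $A$. Let $D(\tau) = \oplus_{j=1}^r \tau_j I_{q_j}$ with all $\tau_j > 0$ and $\sum_j q_j = q$. Then $(A + D(\tau))^{-1} \preceq A^+ + \Big(\sum_{j=1}^r \tau_j^{-1}\Big) (I_q - P_A)$. -/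
open Matrix

section Aux
variable {n : Type*} [Fintype n] [DecidableEq n]

lemma hermDot {P : Matrix n n ℝ} (hP : P.IsHermitian) (a c : n → ℝ) :
    a ⬝ᵥ (P *ᵥ c) = c ⬝ᵥ (P *ᵥ a) := by
  have hPt : Pᵀ = P := by
    conv_rhs => rw [← hP.eq]
    ext i j; simp [conjTranspose_apply]
  rw [dotProduct_mulVec, ← hPt, vecMul_transpose, hPt, dotProduct_comm]

lemma psd_smul {c : ℝ} (hc : 0 ≤ c) {P : Matrix n n ℝ} (hP : P.PosSemidef) :
    (c • P).PosSemidef := by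
  refine PosSemidef.of_dotProduct_mulVec_nonneg ?_ (fun x => ?_)
  · unfold Matrix.IsHermitian
    rw [conjTranspose_smul, hP.1.eq]; simp
  · rw [smul_mulVec, dotProduct_smul, smul_eq_mul]
    exact mul_nonneg hc (by simpa using hP.dotProduct_mulVec_nonneg x)

/-- inverse is antitone on positive definite matrices -/
lemma inv_antitone {M N : Matrix n n ℝ} (hM : M.PosDef) (hN : N.PosDef)
    (h : (M - N⁻¹).PosSemidef) : (N - M⁻¹).PosSemidef := by
  have hMd : IsUnit M.det := (isUnit_iff_isUnit_det _).1 hM.isUnit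
  have hNd : IsUnit N.det := (isUnit_iff_isUnit_det _).1 hN.isUnit
  have hMM : M * M⁻¹ = 1 := mul_nonsing_inv _ hMd
  have hNN : N * N⁻¹ = 1 := mul_nonsing_inv _ hNd
  have hNN' : N⁻¹ * N = 1 := nonsing_inv_mul _ hNd
  refine PosSemidef.of_dotProduct_mulVec_nonneg (hN.isHermitian.sub hM.isHermitian.inv) fun x => ?_
  set y : n → ℝ := M⁻¹ *ᵥ x with hy_def
  have hy : M *ᵥ y = x := by rw [hy_def, mulVec_mulVec, hMM, one_mulVec]
  set z : n → ℝ := N *ᵥ x - y with hz_def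
  have e1 : N⁻¹ *ᵥ z = x - N⁻¹ *ᵥ y := by
    rw [hz_def, mulVec_sub, mulVec_mulVec, hNN', one_mulVec]
  have eB : (N *ᵥ x) ⬝ᵥ (N⁻¹ *ᵥ y) = x ⬝ᵥ y := by
    rw [dotProduct_comm, hermDot hN.isHermitian (N⁻¹ *ᵥ y) x, mulVec_mulVec, hNN, one_mulVec]
  have h1 : 0 ≤ z ⬝ᵥ (N⁻¹ *ᵥ z) := by simpa using hN.inv.posSemidef.dotProduct_mulVec_nonneg z
  have h1' : 0 ≤ x ⬝ᵥ (N *ᵥ x) - x ⬝ᵥ y - y ⬝ᵥ x + y ⬝ᵥ (N⁻¹ *ᵥ y) := by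
    have expand : z ⬝ᵥ (N⁻¹ *ᵥ z)
        = x ⬝ᵥ (N *ᵥ x) - x ⬝ᵥ y - y ⬝ᵥ x + y ⬝ᵥ (N⁻¹ *ᵥ y) := by
      rw [e1, hz_def, sub_dotProduct, dotProduct_sub, dotProduct_sub, eB,
        dotProduct_comm (N *ᵥ x) x]
      ring
    linarith [expand ▸ h1]
  have h2 : 0 ≤ y ⬝ᵥ x - y ⬝ᵥ (N⁻¹ *ᵥ y) := by
    have := h.dotProduct_mulVec_nonneg y
    simp only [star_trivial, sub_mulVec, dotProduct_sub] at this
    rwa [hy] at this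
  have hxy : x ⬝ᵥ y = y ⬝ᵥ x := dotProduct_comm _ _
  simp only [star_trivial, sub_mulVec, dotProduct_sub, ← hy_def]
  linarith

lemma conj_psd {U P : Matrix n n ℝ} (hP : P.PosSemidef) : (Uᵀ * P * U).PosSemidef := by
  have hUc : Uᵀ = Uᴴ := by ext i j; simp [conjTranspose_apply]
  rw [hUc]
  exact hP.conjTranspose_mul_mul_same U

lemma conj_pd {U P : Matrix n n ℝ} (hU : Uᵀ * U = 1) (hP : P.PosDef) :
    (Uᵀ * P * U).PosDef := by
  have hUc : Uᵀ = Uᴴ := by ext i j; simp [conjTranspose_apply]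
  refine PosDef.of_dotProduct_mulVec_pos (by rw [hUc]; exact isHermitian_conjTranspose_mul_mul U hP.1) fun x hx => ?_
  have hUx : U *ᵥ x ≠ 0 := by
    intro hc
    apply hx
    have : Uᵀ *ᵥ (U *ᵥ x) = x := by rw [mulVec_mulVec, hU, one_mulVec]
    rw [hc, mulVec_zero] at this
    exact this.symm
  have : star x ⬝ᵥ ((Uᵀ * P * U) *ᵥ x) = star (U *ᵥ x) ⬝ᵥ (P *ᵥ (U *ᵥ x)) := by
    simp only [star_trivial, ← mulVec_mulVec]
    rw [dotProduct_mulVec x Uᵀ, vecMul_transpose]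
  rw [this]
  exact hP.dotProduct_mulVec_pos hUx

end Aux

/-- Lemma A.1, part 1. Let `A = Uᵀ Λ U` be a symmetric positive semidefinite matrix
given via its spectral decomposition (`U` orthogonal, `Λ = diagonal l` with `l ≥ 0`),
with Moore–Penrose pseudoinverse `A⁺ = Uᵀ Λ⁺ U` and `P_A = Uᵀ (sign Λ) U` the orthogonal
projection onto the column space of `A`.  Let `D(τ) = ⊕ⱼ τⱼ I_{qⱼ}` be block diagonal
with all `τⱼ > 0` (encoded via the block-index map `b : Fin q → Fin r`).  Then
`(A + D(τ))⁻¹ ⪯ A⁺ + (∑ⱼ τⱼ⁻¹)(I − P_A)`. -/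
theorem stmt_10 (q r : ℕ) (U : Matrix (Fin q) (Fin q) ℝ)
    (hU : Uᵀ * U = 1) (hU' : U * Uᵀ = 1)
    (l : Fin q → ℝ) (hl : ∀ i, 0 ≤ l i)
    (A : Matrix (Fin q) (Fin q) ℝ) (hA : A = Uᵀ * diagonal l * U)
    (b : Fin q → Fin r) (hbsurj : Function.Surjective b)
    (τ : Fin r → ℝ) (hτ : ∀ j, 0 < τ j)
    (Aplus PA : Matrix (Fin q) (Fin q) ℝ)
    (hAplus : Aplus = Uᵀ * diagonal (fun i => if l i = 0 then 0 else (l i)⁻¹) * U)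
    (hPA : PA = Uᵀ * diagonal (fun i => if l i = 0 then (0:ℝ) else 1) * U) :
    ((Aplus + (∑ j, (τ j)⁻¹) • (1 - PA)) - (A + diagonal (fun i => τ (b i)))⁻¹).PosSemidef := by
  rcases Nat.eq_zero_or_pos q with hq | hq
  · subst hq
    haveI : IsEmpty (Fin 0) := inferInstance
    have hz : ((Aplus + (∑ j, (τ j)⁻¹) • (1 - PA)) -
        (A + diagonal (fun i => τ (b i)))⁻¹) = 0 := by
      ext i j; exact isEmptyElim i
    rw [hz]; exact .zero
  haveI : Nonempty (Fin r) := ⟨b ⟨0, hq⟩⟩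
  set s : ℝ := ∑ j, (τ j)⁻¹ with hs_def
  have hs : 0 < s := Finset.sum_pos (fun j _ => inv_pos.2 (hτ j)) Finset.univ_nonempty
  -- the "one" as conjugated diagonal
  have hone : (1 : Matrix (Fin q) (Fin q) ℝ) = Uᵀ * diagonal (fun _ => (1:ℝ)) * U := by
    rw [diagonal_one, mul_one, hU]
  have h1mPA : 1 - PA = Uᵀ * diagonal (fun i => if l i = 0 then (1:ℝ) else 0) * U := by
    rw [hPA]
    conv_lhs => rw [hone]
    rw [← sub_mul, ← Matrix.mul_sub, diagonal_sub]
    have : (fun i => (1:ℝ) - if l i = 0 then 0 else 1) = fun i => if l i = 0 then (1:ℝ) else 0 := by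
      funext i; split_ifs <;> norm_num
    rw [this]
  -- conjugated-diagonal product formula
  have diagmul : ∀ a c : Fin q → ℝ,
      (Uᵀ * diagonal a * U) * (Uᵀ * diagonal c * U) = Uᵀ * diagonal (fun i => a i * c i) * U := by
    intro a c
    calc (Uᵀ * diagonal a * U) * (Uᵀ * diagonal c * U)
        = Uᵀ * diagonal a * (U * Uᵀ) * diagonal c * U := by noncomm_ring
      _ = Uᵀ * (diagonal a * diagonal c) * U := by rw [hU', mul_one]; noncomm_ring
      _ = Uᵀ * diagonal (fun i => a i * c i) * U := by rw [diagonal_mul_diagonal]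
  set f : Fin q → ℝ := fun i => if l i = 0 then s else (l i)⁻¹ with hf_def
  set g : Fin q → ℝ := fun i => if l i = 0 then s⁻¹ else l i with hg_def
  set N : Matrix (Fin q) (Fin q) ℝ := Uᵀ * diagonal f * U with hN_def
  have smulconj : ∀ (c : ℝ) (d : Fin q → ℝ),
      c • (Uᵀ * diagonal d * U) = Uᵀ * diagonal (fun i => c * d i) * U := by
    intro c d
    calc c • (Uᵀ * diagonal d * U) = Uᵀ * (c • diagonal d) * U := by
          rw [Matrix.mul_smul, Matrix.smul_mul]
      _ = _ := by
          rw [← diagonal_smul]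
          congr 1
  have hNval : N = Aplus + s • (1 - PA) := by
    rw [hAplus, h1mPA, smulconj s, ← add_mul, ← Matrix.mul_add, diagonal_add, hN_def]
    have : (fun i => (if l i = 0 then (0:ℝ) else (l i)⁻¹) + s * (if l i = 0 then 1 else 0)) = f := by
      funext i; simp only [hf_def]; split_ifs with h <;> ring
    rw [this]
  -- positive definiteness of N
  have hfpos : ∀ i, 0 < f i := by
    intro i
    simp only [hf_def]
    split_ifs with h
    · exact hs
    · exact inv_pos.2 (lt_of_le_of_ne (hl i) (Ne.symm h))
  have hNpd : N.PosDef := conj_pd hU (posDef_diagonal_iff.mpr hfpos)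
  -- explicit inverse of N
  have hNinv : N⁻¹ = Uᵀ * diagonal g * U := by
    refine inv_eq_right_inv ?_
    rw [hN_def, diagmul]
    have : (fun i => f i * g i) = fun _ => (1:ℝ) := by
      funext i
      simp only [hf_def, hg_def]
      split_ifs with h
      · exact mul_inv_cancel₀ hs.ne'
      · exact inv_mul_cancel₀ h
    rw [this, diagonal_one, mul_one, hU]
  have hNinv2 : N⁻¹ = A + s⁻¹ • (1 - PA) := by
    rw [hNinv, hA, h1mPA, smulconj, ← add_mul, ← Matrix.mul_add, diagonal_add]
    have : (fun i => l i + s⁻¹ * (if l i = 0 then (1:ℝ) else 0)) = g := by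
      funext i; simp only [hg_def]; split_ifs with h <;> simp [h]
    rw [this]
  -- positive definiteness of M = A + D
  have hApsd : A.PosSemidef := by
    rw [hA]
    exact conj_psd (PosSemidef.diagonal (fun i => hl i))
  have hDpd : (diagonal (fun i => τ (b i))).PosDef :=
    posDef_diagonal_iff.mpr fun i => hτ (b i)
  have hMpd : (A + diagonal (fun i => τ (b i))).PosDef := Matrix.PosDef.posSemidef_add hApsd hDpd
  -- M - N⁻¹ is PSD
  have hPApsd : PA.PosSemidef := by
    rw [hPA]
    refine conj_psd (PosSemidef.diagonal fun i => ?_)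
    dsimp only
    split_ifs <;> norm_num
  have hsub : (A + diagonal (fun i => τ (b i))) - N⁻¹
      = diagonal (fun i => τ (b i) - s⁻¹) + s⁻¹ • PA := by
    rw [hNinv2, smul_sub]
    have e1 : (diagonal (fun i => τ (b i)) : Matrix (Fin q) (Fin q) ℝ) - s⁻¹ • 1
        = diagonal (fun i => τ (b i) - s⁻¹) := by
      rw [← diagonal_one, ← diagonal_smul, diagonal_sub]
      congr 1
      funext i
      simp
    rw [← e1]
    abel
  have hτs : ∀ i, 0 ≤ τ (b i) - s⁻¹ := by
    intro i
    have h1 : (τ (b i))⁻¹ ≤ s := Finset.single_le_sum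
      (fun j _ => le_of_lt (inv_pos.2 (hτ j))) (Finset.mem_univ (b i))
    have h2 : s⁻¹ ≤ ((τ (b i))⁻¹)⁻¹ := by
      apply inv_anti₀ (inv_pos.2 (hτ (b i))) h1
    rw [inv_inv] at h2
    linarith
  have hMN : ((A + diagonal (fun i => τ (b i))) - N⁻¹).PosSemidef := by
    rw [hsub]
    exact (PosSemidef.diagonal hτs).add (psd_smul (le_of_lt (inv_pos.2 hs)) hPApsd)
  have := inv_antitone hMpd hNpd hMN
  rwa [hNval] at this
end

section
/- Let $t_1, \dots, t_n \in \mathbb{R}^q$ and fix $i \in \{1,\dots,n\}$. Define $\hat\varphi_i^2 = \sup_{\iota \in \mathbb{R}_+^{n+q}} t_i^T \Big( t_i t_i^T + \sum_{k \ne i} \iota_k t_k t_k^T + \sum_{k=n+1}^{n+q} \iota_k e_{k-n} e_{k-n}^T + \iota_1 I_q \Big)^{-2} t_i$, where $e_1, \dots, e_q$ are the standard basis vectors of $\mathbb{R}^q$. Then $\hat\varphi_i^2 < \infty$. -/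
open Matrix Finset

lemma wcb {q : ℕ} {R : Type*} [Fintype R] [DecidableEq R]
    (a b : R → Fin q → ℝ) (w : R → ℝ) :
    (q.factorial : ℝ) * (Matrix.of fun x y => ∑ r : R, w r * (a r x * b r y)).det
      = ∑ f : Fin q → R, (∏ x, w (f x)) *
          ((Matrix.of fun x y => a (f x) y).det * (Matrix.of fun x y => b (f x) y).det) := by
  classical
  have h1 : (Matrix.of fun x y => ∑ r : R, w r * (a r x * b r y)).det
      = ∑ f : Fin q → R, (∏ x, w (f x) * a (f x) x) *
          (Matrix.of fun x y => b (f x) y).det := by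
    have hrow : (Matrix.of fun x y => ∑ r : R, w r * (a r x * b r y))
        = Matrix.of (fun x => ∑ r : R, (w r * a r x) • b r) := by
      ext x y
      simp [Finset.sum_apply, mul_assoc]
    rw [hrow]
    show (Matrix.detRowAlternating : (Fin q → ℝ) [⋀^Fin q]→ₗ[ℝ] ℝ).toMultilinearMap
        (fun x => ∑ r : R, (w r * a r x) • b r) = _
    rw [MultilinearMap.map_sum]
    refine Finset.sum_congr rfl fun f _ => ?_
    rw [MultilinearMap.map_smul_univ]
    rfl
  set T : (Fin q → R) → ℝ := fun f => (∏ x, w (f x) * a (f x) x) *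
      (Matrix.of fun x y => b (f x) y).det with hT
  rw [h1]
  have h2 : ∀ (f : Fin q → R) (σ : Equiv.Perm (Fin q)),
      T (f ∘ σ) = (∏ x, w (f x)) * ((((Equiv.Perm.sign σ : ℤ) : ℝ) * ∏ x, a (f (σ x)) x) *
        (Matrix.of fun x y => b (f x) y).det) := by
    intro f σ
    have hb : (Matrix.of fun x y => b ((f ∘ σ) x) y).det
        = ((Equiv.Perm.sign σ : ℤ) : ℝ) * (Matrix.of fun x y => b (f x) y).det := by
      have h := Matrix.det_permute σ (Matrix.of fun x y => b (f x) y)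
      rw [← h]
      congr 1
    have hw : (∏ x, w ((f ∘ σ) x) * a ((f ∘ σ) x) x)
        = (∏ x, w (f x)) * ∏ x, a (f (σ x)) x := by
      rw [Finset.prod_mul_distrib]
      congr 1
      exact Equiv.prod_comp σ (fun x => w (f x))
    simp only [hT]
    rw [hb, hw]
    ring
  have h4 : ∀ f : Fin q → R, ∑ σ : Equiv.Perm (Fin q), T (f ∘ σ)
      = (∏ x, w (f x)) *
        ((Matrix.of fun x y => a (f x) y).det * (Matrix.of fun x y => b (f x) y).det) := by
    intro f
    rw [Finset.sum_congr rfl (fun σ _ => h2 f σ), ← Finset.mul_sum]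
    congr 1
    rw [← Finset.sum_mul]
    congr 1
    rw [Matrix.det_apply']
    rfl
  have h5 : ∀ σ : Equiv.Perm (Fin q), ∑ f : Fin q → R, T (f ∘ σ) = ∑ f : Fin q → R, T f := by
    intro σ
    refine Fintype.sum_bijective (fun f => f ∘ ⇑σ)
      ⟨fun f g h => ?_, fun g => ⟨g ∘ ⇑σ.symm, ?_⟩⟩ _ _ (fun f => rfl)
    · funext x
      simpa using congrFun h (σ.symm x)
    · funext x
      simp
  calc (q.factorial : ℝ) * ∑ f : Fin q → R, T f
      = ∑ σ : Equiv.Perm (Fin q), ∑ f : Fin q → R, T (f ∘ σ) := by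
        rw [Finset.sum_congr rfl (fun σ _ => h5 σ), Finset.sum_const, Finset.card_univ,
          Fintype.card_perm, Fintype.card_fin, nsmul_eq_mul]
    _ = ∑ f : Fin q → R, ∑ σ : Equiv.Perm (Fin q), T (f ∘ σ) := Finset.sum_comm
    _ = _ := Finset.sum_congr rfl (fun f _ => h4 f)


lemma quad {q : ℕ} {R : Type*} [Fintype R] (a : R → Fin q → ℝ) (w : R → ℝ) (x : Fin q → ℝ) :
    x ⬝ᵥ ((Matrix.of fun p y => ∑ r : R, w r * (a r p * a r y)) *ᵥ x)
      = ∑ r : R, w r * ((a r ⬝ᵥ x) * (a r ⬝ᵥ x)) := by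
  simp only [dotProduct, Matrix.mulVec, Matrix.of_apply, Finset.sum_mul, Finset.mul_sum]
  calc ∑ p : Fin q, ∑ y : Fin q, ∑ r : R, x p * (w r * (a r p * a r y) * x y)
      = ∑ p : Fin q, ∑ r : R, ∑ y : Fin q, x p * (w r * (a r p * a r y) * x y) :=
        Finset.sum_congr rfl fun p _ => Finset.sum_comm
    _ = ∑ r : R, ∑ p : Fin q, ∑ y : Fin q, x p * (w r * (a r p * a r y) * x y) :=
        Finset.sum_comm
    _ = ∑ r : R, ∑ p : Fin q, ∑ y : Fin q, w r * (a r p * x p * (a r y * x y)) :=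
        Finset.sum_congr rfl fun r _ => Finset.sum_congr rfl fun p _ =>
          Finset.sum_congr rfl fun y _ => by ring
    _ = ∑ r : R, ∑ y : Fin q, ∑ p : Fin q, w r * (a r p * x p * (a r y * x y)) :=
        Finset.sum_congr rfl fun r _ => Finset.sum_comm


/-- Finiteness of the supremum `φ̂ᵢ²` from Lemma 3 of Roman & Hobert (2012):
with `M(ι) = tᵢtᵢᵀ + ∑_{k≠i} ι_k t_k t_kᵀ + ∑_j ι_{n+j} e_j e_jᵀ + ι₁ I`, the quantity
`sup_{ι ∈ ℝ₊^{n+q}} tᵢᵀ M(ι)⁻² tᵢ` is finite. -/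
theorem stmt_16 (n q : ℕ) [NeZero n] (t : Fin n → Fin q → ℝ) (i : Fin n) :
    ∃ C : ℝ, ∀ ι : Fin n ⊕ Fin q → ℝ, (∀ k, 0 < ι k) →
      (let M : Matrix (Fin q) (Fin q) ℝ :=
        vecMulVec (t i) (t i)
          + ∑ k ∈ Finset.univ.erase i, ι (Sum.inl k) • vecMulVec (t k) (t k)
          + ∑ j : Fin q, ι (Sum.inr j) •
              vecMulVec (Pi.single j (1:ℝ)) (Pi.single j (1:ℝ))
          + ι (Sum.inl 0) • (1 : Matrix (Fin q) (Fin q) ℝ);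
        t i ⬝ᵥ ((M * M)⁻¹).mulVec (t i)) ≤ C := by
  classical
  set a : (Fin q ⊕ Fin n) → Fin q → ℝ := Sum.elim (fun j => Pi.single j 1) t with ha
  set εv : (Fin q ⊕ Fin n) → ℝ := Sum.elim (fun _ => 0) (Pi.single i 1) with hεv
  set bb : Fin q → (Fin q ⊕ Fin n) → Fin q → ℝ :=
    fun j r => Function.update (a r) j (εv r) with hbb
  set detA : ((Fin q → Fin q ⊕ Fin n)) → ℝ :=
    fun f => (Matrix.of fun x y => a (f x) y).det with hdetA
  set detB : Fin q → ((Fin q → Fin q ⊕ Fin n)) → ℝ :=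
    fun j f => (Matrix.of fun x y => bb j (f x) y).det with hdetB
  set Cj : Fin q → ℝ :=
    fun j => ∑ f : Fin q → Fin q ⊕ Fin n, if detA f = 0 then 0 else |detB j f| / |detA f|
    with hCj
  have hCj0 : ∀ j, 0 ≤ Cj j := by
    intro j
    simp only [hCj]
    refine Finset.sum_nonneg fun f _ => ?_
    split
    · exact le_rfl
    · positivity
  refine ⟨∑ j : Fin q, Cj j * Cj j, ?_⟩
  intro ι hι
  set w : (Fin q ⊕ Fin n) → ℝ :=
    Sum.elim (fun j => ι (Sum.inr j) + ι (Sum.inl 0))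
      (fun k => if k = i then 1 else ι (Sum.inl k)) with hw
  have hw0 : ∀ r, 0 < w r := by
    rintro (j | k)
    · have := hι (Sum.inr j); have := hι (Sum.inl 0); simp only [hw, Sum.elim_inl]; linarith
    · simp only [hw, Sum.elim_inr]
      split
      · exact one_pos
      · exact hι _
  show t i ⬝ᵥ (((vecMulVec (t i) (t i)
          + ∑ k ∈ Finset.univ.erase i, ι (Sum.inl k) • vecMulVec (t k) (t k)
          + ∑ j : Fin q, ι (Sum.inr j) •
              vecMulVec (Pi.single j (1:ℝ)) (Pi.single j (1:ℝ))
          + ι (Sum.inl 0) • (1 : Matrix (Fin q) (Fin q) ℝ)) *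
        (vecMulVec (t i) (t i)
          + ∑ k ∈ Finset.univ.erase i, ι (Sum.inl k) • vecMulVec (t k) (t k)
          + ∑ j : Fin q, ι (Sum.inr j) •
              vecMulVec (Pi.single j (1:ℝ)) (Pi.single j (1:ℝ))
          + ι (Sum.inl 0) • (1 : Matrix (Fin q) (Fin q) ℝ)))⁻¹).mulVec (t i)
      ≤ ∑ j : Fin q, Cj j * Cj j
  set M : Matrix (Fin q) (Fin q) ℝ := vecMulVec (t i) (t i)
          + ∑ k ∈ Finset.univ.erase i, ι (Sum.inl k) • vecMulVec (t k) (t k)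
          + ∑ j : Fin q, ι (Sum.inr j) •
              vecMulVec (Pi.single j (1:ℝ)) (Pi.single j (1:ℝ))
          + ι (Sum.inl 0) • (1 : Matrix (Fin q) (Fin q) ℝ) with hMdef
  -- M in weighted-Gram form
  have hM : M = Matrix.of fun p y => ∑ r : Fin q ⊕ Fin n, w r * (a r p * a r y) := by
    rw [hMdef]
    ext p y
    have single_prod : ∀ jj : Fin q, (Pi.single jj 1 : Fin q → ℝ) p * (Pi.single jj 1 : Fin q → ℝ) y
        = if p = jj then (if y = jj then (1:ℝ) else 0) else 0 := by
      intro jj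
      simp [Pi.single_apply]
      split <;> simp
    have e1 : ∑ k : Fin n, (if k = i then (1:ℝ) else ι (Sum.inl k)) * (t k p * t k y)
        = t i p * t i y + ∑ k ∈ Finset.univ.erase i, ι (Sum.inl k) * (t k p * t k y) := by
      rw [← Finset.add_sum_erase _ _ (Finset.mem_univ i), if_pos rfl, one_mul]
      congr 1
      refine Finset.sum_congr rfl fun k hk => ?_
      rw [if_neg (Finset.mem_erase.1 hk).1]
    have e2 : ∑ jj : Fin q, (Pi.single jj 1 : Fin q → ℝ) p * (Pi.single jj 1 : Fin q → ℝ) y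
        = if p = y then (1:ℝ) else 0 := by
      rw [Finset.sum_congr rfl fun jj _ => single_prod jj]
      by_cases hpy : p = y
      · subst hpy
        simp
      · rw [if_neg hpy]
        refine Finset.sum_eq_zero fun jj _ => ?_
        split
        · rename_i h1
          rw [if_neg (by rw [← h1]; exact fun hc => hpy hc.symm)]
        · rfl
    simp only [Matrix.add_apply, Matrix.sum_apply, Matrix.smul_apply, vecMulVec_apply,
      Matrix.one_apply, smul_eq_mul, Matrix.of_apply, Fintype.sum_sum_type, ha,
      Sum.elim_inl, Sum.elim_inr, hw]
    rw [e1]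
    have e3 : ∑ jj : Fin q, (ι (Sum.inr jj) + ι (Sum.inl 0)) *
          ((Pi.single jj 1 : Fin q → ℝ) p * (Pi.single jj 1 : Fin q → ℝ) y)
        = (∑ jj : Fin q, ι (Sum.inr jj) * ((Pi.single jj 1 : Fin q → ℝ) p * (Pi.single jj 1 : Fin q → ℝ) y))
          + ι (Sum.inl 0) * (if p = y then (1:ℝ) else 0) := by
      rw [← e2, Finset.mul_sum, ← Finset.sum_add_distrib]
      exact Finset.sum_congr rfl fun jj _ => by ring
    rw [e3]
    ring
  -- t i as weighted combination
  have ht : t i = fun p => ∑ r : Fin q ⊕ Fin n, w r * (a r p * εv r) := by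
    funext p
    rw [Fintype.sum_sum_type]
    simp only [hw, ha, hεv, Sum.elim_inl, Sum.elim_inr, mul_zero, Finset.sum_const_zero,
      zero_add]
    have hterm : ∀ k : Fin n, (if k = i then (1:ℝ) else ι (Sum.inl k)) *
        (t k p * (Pi.single i 1 : Fin n → ℝ) k) = if k = i then t i p else 0 := by
      intro k
      by_cases hk : k = i
      · subst hk; simp
      · simp [hk, Pi.single_apply]
    rw [Finset.sum_congr rfl fun k _ => hterm k, Finset.sum_ite_eq' Finset.univ i
      (fun _ => t i p)]
    simp
  -- positive definiteness
  have hPD : M.PosDef := by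
    refine Matrix.PosDef.of_dotProduct_mulVec_pos ?_ ?_
    · show Mᴴ = M
      rw [hM]
      ext p y
      simp only [Matrix.conjTranspose_apply, Matrix.of_apply, star_trivial]
      exact Finset.sum_congr rfl fun r _ => by ring
    · intro x hx
      have hsx : star x = x := by
        funext p; exact star_trivial _
      rw [hsx, hM, quad a w x]
      obtain ⟨p, hp⟩ := Function.ne_iff.1 hx
      refine Finset.sum_pos' (fun r _ => mul_nonneg (hw0 r).le (mul_self_nonneg _)) ?_
      refine ⟨Sum.inl p, Finset.mem_univ _, ?_⟩
      have hdp : a (Sum.inl p) ⬝ᵥ x = x p := by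
        simp only [ha, Sum.elim_inl, dotProduct, Pi.single_apply, ite_mul, one_mul, zero_mul]
        rw [Finset.sum_ite_eq' Finset.univ p x]
        simp
      rw [hdp]
      exact mul_pos (hw0 _) (mul_self_pos.2 hp)
  have hdet : 0 < M.det := hPD.det_pos
  have hdu : IsUnit M.det := hdet.ne'.isUnit
  set v : Fin q → ℝ := M⁻¹ *ᵥ t i with hv
  have hcr : ∀ j, M.det * v j = (M.updateCol j (t i)).det := by
    intro j
    have h := Matrix.det_smul_inv_mulVec_eq_cramer M (t i) hdu
    have h2 := congrFun h j
    simpa [Matrix.cramer_apply, hv, smul_eq_mul] using h2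
  have hup : ∀ j, M.updateCol j (t i)
      = Matrix.of fun p y => ∑ r : Fin q ⊕ Fin n, w r * (a r p * bb j r y) := by
    intro j
    ext p y
    rw [Matrix.updateCol_apply]
    by_cases hyj : y = j
    · subst hyj
      rw [if_pos rfl]
      have : ∀ r, bb y r y = εv r := fun r => Function.update_self _ _ _
      simp only [Matrix.of_apply, this]
      exact congrFun ht p
    · rw [if_neg hyj, hM]
      have : ∀ r, bb j r y = a r y := fun r => Function.update_of_ne hyj _ _
      simp only [Matrix.of_apply, this]
  have hwcb1 : (q.factorial : ℝ) * M.det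
      = ∑ f : Fin q → Fin q ⊕ Fin n, (∏ x, w (f x)) * (detA f * detA f) := by
    rw [hM]
    simpa only [hdetA] using wcb a a w
  have hwcb2 : ∀ j, (q.factorial : ℝ) * (M.updateCol j (t i)).det
      = ∑ f : Fin q → Fin q ⊕ Fin n, (∏ x, w (f x)) * (detA f * detB j f) := by
    intro j
    rw [hup j]
    simpa only [hdetA, hdetB] using wcb a (bb j) w
  have hfacpos : (0:ℝ) < (q.factorial : ℝ) := by positivity
  have hbound : ∀ j, |v j| ≤ Cj j := by
    intro j
    have key : |∑ f : Fin q → Fin q ⊕ Fin n, (∏ x, w (f x)) * (detA f * detB j f)|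
        ≤ Cj j * ((q.factorial:ℝ) * M.det) := by
      calc |∑ f : Fin q → Fin q ⊕ Fin n, (∏ x, w (f x)) * (detA f * detB j f)|
          ≤ ∑ f : Fin q → Fin q ⊕ Fin n, |(∏ x, w (f x)) * (detA f * detB j f)| :=
            Finset.abs_sum_le_sum_abs _ _
        _ ≤ ∑ f : Fin q → Fin q ⊕ Fin n, Cj j * ((∏ x, w (f x)) * (detA f * detA f)) := by
            refine Finset.sum_le_sum fun f _ => ?_
            have hpf : (0:ℝ) ≤ ∏ x, w (f x) :=
              Finset.prod_nonneg fun x _ => (hw0 _).le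
            rw [abs_mul, abs_of_nonneg hpf]
            by_cases hz : detA f = 0
            · rw [hz]
              simp
            · have hterm : (if detA f = 0 then (0:ℝ) else |detB j f| / |detA f|) ≤ Cj j := by
                rw [hCj]
                refine Finset.single_le_sum (f := fun f' =>
                  if detA f' = 0 then (0:ℝ) else |detB j f'| / |detA f'|) (fun f' _ => ?_)
                  (Finset.mem_univ f)
                split
                · exact le_rfl
                · positivity
              rw [if_neg hz] at hterm
              have hdb : |detB j f| ≤ Cj j * |detA f| := by
                rw [div_le_iff₀ (abs_pos.2 hz)] at hterm
                exact hterm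
              have : |detA f * detB j f| ≤ Cj j * (detA f * detA f) := by
                rw [abs_mul, ← abs_mul_abs_self (detA f)]
                calc |detA f| * |detB j f| ≤ |detA f| * (Cj j * |detA f|) :=
                      mul_le_mul_of_nonneg_left hdb (abs_nonneg _)
                  _ = Cj j * (|detA f| * |detA f|) := by ring
              calc (∏ x, w (f x)) * |detA f * detB j f|
                  ≤ (∏ x, w (f x)) * (Cj j * (detA f * detA f)) :=
                    mul_le_mul_of_nonneg_left this hpf
                _ = Cj j * ((∏ x, w (f x)) * (detA f * detA f)) := by ring
        _ = Cj j * ∑ f : Fin q → Fin q ⊕ Fin n, (∏ x, w (f x)) * (detA f * detA f) := by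
            rw [Finset.mul_sum]
        _ = Cj j * ((q.factorial:ℝ) * M.det) := by rw [hwcb1]
    rw [← hwcb2 j, ← hcr j] at key
    have key2 : (q.factorial : ℝ) * (M.det * |v j|) ≤ (q.factorial : ℝ) * (M.det * Cj j) := by
      calc (q.factorial : ℝ) * (M.det * |v j|)
          = |(q.factorial : ℝ) * (M.det * v j)| := by
            rw [abs_mul, abs_mul, abs_of_pos hfacpos, abs_of_pos hdet]
        _ ≤ Cj j * ((q.factorial:ℝ) * M.det) := key
        _ = (q.factorial : ℝ) * (M.det * Cj j) := by ring
    have key3 : M.det * |v j| ≤ M.det * Cj j :=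
      le_of_mul_le_mul_left key2 hfacpos
    exact le_of_mul_le_mul_left key3 hdet
  have hMsym : Mᵀ = M := by
    rw [hM]
    ext p y
    simp only [Matrix.transpose_apply, Matrix.of_apply]
    exact Finset.sum_congr rfl fun r _ => by ring
  have hMinvsym : M⁻¹ᵀ = M⁻¹ := by
    rw [Matrix.transpose_nonsing_inv, hMsym]
  have hfin : t i ⬝ᵥ ((M * M)⁻¹ *ᵥ t i) = v ⬝ᵥ v := by
    rw [Matrix.mul_inv_rev, ← Matrix.mulVec_mulVec, Matrix.dotProduct_mulVec]
    congr 1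
    conv_lhs => rw [← hMinvsym]
    rw [Matrix.vecMul_transpose]
  rw [hfin]
  have : v ⬝ᵥ v = ∑ j : Fin q, v j * v j := rfl
  rw [this]
  refine Finset.sum_le_sum fun j _ => ?_
  calc v j * v j = |v j| * |v j| := (abs_mul_abs_self _).symm
    _ ≤ Cj j * Cj j :=
      mul_le_mul (hbound j) (hbound j) (abs_nonneg _) (hCj0 j)
end
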